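/- Suppose F has a density f on [0,1] that is continuously differentiable with f′ absolutely continuous. Then for every 0 < a < 1/2 there exists a constant C > 0, depending only on f and a, such that for all positive integers m, sup_{x ∈ [a, 1−a]} |F^{(m)}(x) − F(x)| ≤ C/m. -/

import Mathlib

open MeasureTheory ProbabilityTheory Real

open scoped ENNReal

noncomputable section

/-- pmf of Binomial(m, s) at k. -/
def binomPMFr (m k : ℕ) (s : ℝ) : ℝ := (m.choose k : ℝ) * s ^ k * (1 - s) ^ (m - k)

/-- Law of ŝ = X/m where X ~ Binomial(m, s). -/
def binomLaw (m : ℕ) (s : ℝ) : Measure ℝ :=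
  ∑ k ∈ Finset.range (m + 1), ENNReal.ofReal (binomPMFr m k s) • Measure.dirac ((k : ℝ) / m)

/-- Binomial-mixture law of ŝ where s ~ μ. -/
def mixLaw (μ : Measure ℝ) (m : ℕ) : Measure ℝ := μ.bind (binomLaw m)

/-- CDF of a measure. -/
def cdfOf (μ : Measure ℝ) (x : ℝ) : ℝ := (μ (Set.Iic x)).toReal

/-- Distribution on `[0,1]` with Lebesgue density `f`. -/
def densityMeasure (f : ℝ → ℝ) : Measure ℝ :=
  (volume.restrict (Set.Icc (0:ℝ) 1)).withDensity fun x => ENNReal.ofReal (f x)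

lemma choose_id (m k : ℕ) (hm : 1 ≤ m) : m * ((m-1).choose k) = (m.choose (k+1)) * (k+1) := by
  have h := Nat.add_one_mul_choose_eq (m-1) k
  simpa [Nat.succ_eq_add_one, Nat.sub_add_cancel hm] using h

lemma binomPMFr_hasDerivAt (m k : ℕ) (s : ℝ) :
    HasDerivAt (binomPMFr m k)
      ((k : ℝ) * (m.choose k) * s^(k-1) * (1-s)^(m-k)
        - ((m - k : ℕ) : ℝ) * (m.choose k) * s^k * (1-s)^(m-k-1)) s := by
  have h1 : HasDerivAt (fun u : ℝ => u ^ k) ((k:ℝ) * s ^ (k-1)) s := hasDerivAt_pow k s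
  have hs : HasDerivAt (fun u : ℝ => 1 - u) (-1) s := by
    simpa using (hasDerivAt_id s).const_sub (1:ℝ)
  have h2 : HasDerivAt (fun u : ℝ => (1-u) ^ (m-k))
      ((((m-k : ℕ):ℝ) * (1-s) ^ (m-k-1)) * (-1)) s :=
    (hasDerivAt_pow (m-k) (1-s)).comp s hs
  have h3 := ((h1.const_mul ((m.choose k : ℝ))).fun_mul h2)
  have heq : binomPMFr m k = fun u : ℝ => ((m.choose k : ℝ) * u ^ k) * (1-u)^(m-k) := by
    funext u; simp only [binomPMFr]
  rw [heq]
  refine h3.congr_deriv ?_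
  ring

lemma key_identity (m j : ℕ) (hj : j < m) (s : ℝ) :
    ∑ k ∈ Finset.range (j+1), binomPMFr m k s
      = ((m : ℝ) * ((m-1).choose j)) * ∫ t in s..(1:ℝ), t^j * (1-t)^(m-1-j) := by
  have hm : 1 ≤ m := by omega
  have hφc : Continuous (fun t : ℝ => t^j * (1-t)^(m-1-j)) := by fun_prop
  set c : ℝ := (m : ℝ) * ((m-1).choose j) with hc
  set L : ℝ → ℝ := fun u => ∑ k ∈ Finset.range (j+1), binomPMFr m k u with hL
  set R : ℝ → ℝ := fun u => c * ∫ t in u..(1:ℝ), t^j * (1-t)^(m-1-j) with hR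
  have hLd : ∀ u : ℝ, HasDerivAt L (-(c * (u^j * (1-u)^(m-1-j)))) u := by
    intro u
    set g : ℕ → ℝ := fun k => match k with
      | 0 => 0
      | (k'+1) => (m:ℝ) * ((m-1).choose k') * u^k' * (1-u)^(m-1-k') with hg
    have hterm : ∀ k ∈ Finset.range (j+1), HasDerivAt (fun v => binomPMFr m k v) (g k - g (k+1)) u := by
      intro k hk
      have hkm : k < m := lt_of_le_of_lt (Nat.lt_succ_iff.1 (Finset.mem_range.1 hk)) hj
      have h := binomPMFr_hasDerivAt m k u
      convert h using 1
      match k with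
      | 0 =>
        have e1 : m - 0 - 1 = m - 1 - 0 := by omega
        have e3 : ((m-1).choose 0 : ℝ) = (m.choose 0 : ℝ) := by norm_num
        have e2 : ((m - 0 : ℕ):ℝ) = (m:ℝ) := by norm_num
        simp only [hg, e1, e2, e3]
        push_cast
        ring
      | (k'+1) =>
        have hn1 : m * ((m-1).choose k') = (m.choose (k'+1)) * (k'+1) := choose_id m k' hm
        have hn2 : (m - (k'+1)) * (m.choose (k'+1)) = m * ((m-1).choose (k'+1)) := by
          have h1 : m.choose (k'+1+1) * (k'+1+1) = m.choose (k'+1) * (m - (k'+1)) :=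
            Nat.choose_succ_right_eq m (k'+1)
          have h2 : m * ((m-1).choose (k'+1)) = (m.choose (k'+1+1)) * (k'+1+1) :=
            choose_id m (k'+1) hm
          rw [h2, h1, Nat.mul_comm]
        have hn1' : (k'+1) * (m.choose (k'+1)) = m * ((m-1).choose k') := by
          rw [Nat.mul_comm]; exact hn1.symm
        have e1 : (k'+1) - 1 = k' := by omega
        have e2 : m - (k'+1) = m - 1 - k' := by omega
        have e3 : m - (k'+1) - 1 = m - 1 - (k'+1) := by omega
        have c1 : ((k'+1 : ℕ):ℝ) * (m.choose (k'+1)) = (m:ℝ) * ((m-1).choose k') := by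
          exact_mod_cast congrArg (Nat.cast (R := ℝ)) hn1'
        have c2 : ((m - (k'+1) : ℕ):ℝ) * (m.choose (k'+1)) = (m:ℝ) * ((m-1).choose (k'+1)) := by
          exact_mod_cast congrArg (Nat.cast (R := ℝ)) hn2
        simp only [hg, e1]
        rw [← e2, ← e3]
        linear_combination (-(u^k' * (1-u)^(m-(k'+1)))) * c1 + (u^(k'+1) * (1-u)^(m-(k'+1)-1)) * c2
    have hsum : HasDerivAt L (∑ k ∈ Finset.range (j+1), (g k - g (k+1))) u :=
      HasDerivAt.fun_sum hterm
    rw [Finset.sum_range_sub'] at hsum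
    convert hsum using 1
    simp only [hg]
    ring
  have hRd : ∀ u : ℝ, HasDerivAt R (-(c * (u^j * (1-u)^(m-1-j)))) u := by
    intro u
    have hint : HasDerivAt (fun v => ∫ t in (1:ℝ)..v, t^j * (1-t)^(m-1-j))
        (u^j * (1-u)^(m-1-j)) u := by
      refine intervalIntegral.integral_hasDerivAt_right (hφc.intervalIntegrable _ _) ?_
        hφc.continuousAt
      exact hφc.stronglyMeasurable.stronglyMeasurableAtFilter
    have hownR : R = fun v => c * (-(∫ t in (1:ℝ)..v, t^j*(1-t)^(m-1-j))) := by
      funext v; simp only [hR]; rw [intervalIntegral.integral_symm 1 v]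
    rw [hownR]
    simpa [mul_comm] using (hint.neg.const_mul c)
  have hconst : L s - R s = L 1 - R 1 := by
    refine is_const_of_deriv_eq_zero (f := fun v => L v - R v) ?_ ?_ s 1
    · exact fun u => (((hLd u).sub (hRd u)).differentiableAt)
    · intro u
      have := ((hLd u).fun_sub (hRd u)).deriv
      rw [this]; ring
  have hL1 : L 1 = 0 := by
    refine Finset.sum_eq_zero fun k hk => ?_
    have hne : m - k ≠ 0 := by have := Finset.mem_range.1 hk; omega
    simp [binomPMFr, zero_pow hne]
  have hR1 : R 1 = 0 := by simp [hR]
  have : L s - R s = 0 := by rw [hconst, hL1, hR1]; ring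
  have := sub_eq_zero.1 this
  simpa [hL, hR] using this

lemma beta_nat_integral (p q : ℕ) :
    (((p+q+1 : ℕ) : ℝ) * (((p+q).choose p : ℕ) : ℝ)) * ∫ t in (0:ℝ)..1, t^p * (1-t)^q = 1 := by
  have h := key_identity (p+q+1) p (by omega) 0
  have hsum : ∑ k ∈ Finset.range (p+1), binomPMFr (p+q+1) k 0 = 1 := by
    rw [Finset.sum_eq_single 0]
    · simp [binomPMFr]
    · intro k _ hk0; simp [binomPMFr, zero_pow hk0]
    · intro h0; exact absurd (Finset.mem_range.2 (by omega)) h0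
  have e1 : p+q+1-1 = p+q := by omega
  have e2 : p+q-p = q := by omega
  rw [hsum, e1, e2] at h
  exact h.symm

lemma binomPMFr_continuous (m k : ℕ) : Continuous (binomPMFr m k) := by
  unfold binomPMFr; fun_prop

lemma binomPMFr_nonneg (m k : ℕ) {s : ℝ} (h0 : 0 ≤ s) (h1 : s ≤ 1) :
    0 ≤ binomPMFr m k s := by
  unfold binomPMFr
  have : (0:ℝ) ≤ 1 - s := by linarith
  positivity

lemma binomLaw_apply (m : ℕ) (s : ℝ) (A : Set ℝ) (hA : MeasurableSet A) :
    binomLaw m s A = ∑ k ∈ Finset.range (m+1),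
      ENNReal.ofReal (binomPMFr m k s) * A.indicator (1 : ℝ → ℝ≥0∞) ((k:ℝ)/m) := by
  rw [binomLaw, Measure.finset_sum_apply]
  refine Finset.sum_congr rfl fun k _ => ?_
  rw [Measure.smul_apply, Measure.dirac_apply' _ hA, smul_eq_mul]

lemma measurable_binomLaw (m : ℕ) : Measurable (binomLaw m) := by
  refine Measure.measurable_of_measurable_coe _ fun A hA => ?_
  simp_rw [binomLaw_apply m _ A hA]
  refine Finset.measurable_sum _ fun k _ => ?_
  exact (ENNReal.measurable_ofReal.comp (binomPMFr_continuous m k).measurable).mul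
    measurable_const

lemma cdf_density (f : ℝ → ℝ) (hf0 : ∀ x, 0 ≤ f x) (hfc : Continuous f)
    (x : ℝ) (hx0 : 0 ≤ x) (hx1 : x ≤ 1) :
    cdfOf (densityMeasure f) x = ∫ s in (0:ℝ)..x, f s := by
  rw [cdfOf, densityMeasure, withDensity_apply _ measurableSet_Iic,
    Measure.restrict_restrict measurableSet_Iic]
  have hset : Set.Iic x ∩ Set.Icc (0:ℝ) 1 = Set.Icc 0 x := by
    ext t; simp only [Set.mem_inter_iff, Set.mem_Iic, Set.mem_Icc]
    constructor
    · rintro ⟨h1, h2, _⟩; exact ⟨h2, h1⟩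
    · rintro ⟨h1, h2⟩; exact ⟨h2, h1, h2.trans hx1⟩
  rw [hset, ← ofReal_integral_eq_lintegral_ofReal
      (hfc.integrableOn_Icc) (Filter.Eventually.of_forall hf0),
    ENNReal.toReal_ofReal (setIntegral_nonneg measurableSet_Icc fun s _ => hf0 s),
    MeasureTheory.integral_Icc_eq_integral_Ioc, ← intervalIntegral.integral_of_le hx0]

lemma cdf_mix (f : ℝ → ℝ) (hf0 : ∀ x, 0 ≤ f x) (hfc : Continuous f)
    (m : ℕ) (hm : 0 < m) (x : ℝ) (hx0 : 0 ≤ x) (hjm : ⌊(m:ℝ)*x⌋₊ < m) :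
    cdfOf (mixLaw (densityMeasure f) m) x
      = ∫ s in (0:ℝ)..1, f s * ∑ k ∈ Finset.range (⌊(m:ℝ)*x⌋₊ + 1), binomPMFr m k s := by
  have hm' : (0:ℝ) < m := by exact_mod_cast hm
  set j := ⌊(m:ℝ)*x⌋₊ with hj
  set A : ℝ → ℝ := fun s => ∑ k ∈ Finset.range (j+1), binomPMFr m k s with hA
  have hAc : Continuous A := by
    exact continuous_finset_sum _ fun k _ => binomPMFr_continuous m k
  have hAnn : ∀ s ∈ Set.Icc (0:ℝ) 1, 0 ≤ A s := fun s hs =>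
    Finset.sum_nonneg fun k _ => binomPMFr_nonneg m k hs.1 hs.2
  have hfilt : (Finset.range (m+1)).filter (fun k : ℕ => ((k:ℝ)/m ≤ x)) = Finset.range (j+1) := by
    ext k; simp only [Finset.mem_filter, Finset.mem_range]
    constructor
    · rintro ⟨_, hle⟩
      have h1 : (k:ℝ) ≤ m*x := by
        rw [div_le_iff₀ hm'] at hle; linarith [hle]
      have : k ≤ j := Nat.le_floor h1
      omega
    · intro hk
      have hk' : k ≤ j := by omega
      refine ⟨by omega, ?_⟩
      have h1 : (k:ℝ) ≤ (j:ℝ) := by exact_mod_cast hk'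
      have h2 : (j:ℝ) ≤ (m:ℝ)*x := Nat.floor_le (mul_nonneg (Nat.cast_nonneg m) hx0)
      rw [div_le_iff₀ hm']; linarith
  have hbin : ∀ s ∈ Set.Icc (0:ℝ) 1, binomLaw m s (Set.Iic x) = ENNReal.ofReal (A s) := by
    intro s hs
    rw [binomLaw_apply _ _ _ measurableSet_Iic]
    have hterm : ∀ k ∈ Finset.range (m+1),
        ENNReal.ofReal (binomPMFr m k s) * (Set.Iic x).indicator (1:ℝ → ℝ≥0∞) ((k:ℝ)/m)
        = if ((k:ℝ)/m ≤ x) then ENNReal.ofReal (binomPMFr m k s) else 0 := by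
      intro k _
      by_cases h : ((k:ℝ)/m ≤ x) <;>
        simp [Set.indicator_apply, Set.mem_Iic, h]
    rw [Finset.sum_congr rfl hterm, ← Finset.sum_filter, hfilt]
    exact (ENNReal.ofReal_sum_of_nonneg fun k _ => binomPMFr_nonneg m k hs.1 hs.2).symm
  have hg : Measurable fun s : ℝ => binomLaw m s (Set.Iic x) :=
    (Measure.measurable_coe measurableSet_Iic).comp (measurable_binomLaw m)
  have hmf : Measurable fun s : ℝ => ENNReal.ofReal (f s) :=
    ENNReal.measurable_ofReal.comp hfc.measurable
  rw [cdfOf, mixLaw, Measure.bind_apply measurableSet_Iic (measurable_binomLaw m).aemeasurable,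
    densityMeasure, lintegral_withDensity_eq_lintegral_mul _ hmf hg]
  have hcong : ∫⁻ s in Set.Icc (0:ℝ) 1,
        ((fun a => ENNReal.ofReal (f a)) * fun s => binomLaw m s (Set.Iic x)) s
      = ∫⁻ s in Set.Icc (0:ℝ) 1, ENNReal.ofReal (f s * A s) := by
    refine setLIntegral_congr_fun measurableSet_Icc ?_
    intro s hs
    simp only [Pi.mul_apply]
    rw [hbin s hs, ← ENNReal.ofReal_mul (hf0 s)]
  rw [hcong, ← ofReal_integral_eq_lintegral_ofReal (f := fun s => f s * A s) ((hfc.mul hAc).integrableOn_Icc)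
      ((ae_restrict_iff' measurableSet_Icc).2 (Filter.Eventually.of_forall fun s hs =>
        mul_nonneg (hf0 s) (hAnn s hs))),
    ENNReal.toReal_ofReal (setIntegral_nonneg measurableSet_Icc fun s hs =>
      mul_nonneg (hf0 s) (hAnn s hs)),
    MeasureTheory.integral_Icc_eq_integral_Ioc,
    ← intervalIntegral.integral_of_le (by norm_num : (0:ℝ) ≤ 1)]

set_option maxHeartbeats 2000000 in
/-- If `F` has a continuously differentiable density `f` on `[0,1]` whose
derivative `f'` is absolutely continuous, then for every `0 < a < 1/2` there is a
constant `C > 0` (depending only on `f` and `a`) such that for all positive integers `m`,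
`sup_{x ∈ [a, 1−a]} |F^{(m)}(x) − F(x)| ≤ C/m`. -/
theorem stmt8 (f : ℝ → ℝ)
    (hf0 : ∀ x, 0 ≤ f x) (hdens : ∫ x in Set.Icc (0:ℝ) 1, f x = 1)
    (hC1 : ContDiff ℝ 1 f)
    -- `f'` is absolutely continuous on `[0,1]`: it is an indefinite integral of an
    -- integrable function `g`.
    (hAC : ∃ g : ℝ → ℝ, IntegrableOn g (Set.Icc (0:ℝ) 1) volume ∧
      ∀ x ∈ Set.Icc (0:ℝ) 1, deriv f x = deriv f 0 + ∫ t in (0:ℝ)..x, g t)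
    (a : ℝ) (ha0 : 0 < a) (ha1 : a < 1/2) :
    ∃ C : ℝ, 0 < C ∧ ∀ m : ℕ, 1 ≤ m →
      (⨆ x : Set.Icc a (1 - a),
          |cdfOf (mixLaw (densityMeasure f) m) x - cdfOf (densityMeasure f) x|)
        ≤ C / m := by
  clear hdens hAC
  have hfc : Continuous f := hC1.continuous
  -- antiderivative
  have hFrd : ∀ t : ℝ, HasDerivAt (fun v => ∫ s in (0:ℝ)..v, f s) (f t) t := fun t =>
    intervalIntegral.integral_hasDerivAt_right (hfc.intervalIntegrable _ _)
      (hfc.stronglyMeasurable.stronglyMeasurableAtFilter) hfc.continuousAt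
  have hFrc : Continuous (fun v => ∫ s in (0:ℝ)..v, f s) := by
    have : Differentiable ℝ (fun v => ∫ s in (0:ℝ)..v, f s) := fun t => (hFrd t).differentiableAt
    exact this.continuous
  -- bounds
  obtain ⟨B, hB⟩ := (isCompact_Icc : IsCompact (Set.Icc (0:ℝ) 1)).exists_bound_of_continuousOn
    hfc.continuousOn
  obtain ⟨K, hK⟩ := (isCompact_Icc : IsCompact (Set.Icc (0:ℝ) 1)).exists_bound_of_continuousOn
    ((hC1.continuous_deriv le_rfl).continuousOn)
  set B' := max B 0 with hB'
  set K' := max K 0 with hK'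
  have hBnn : 0 ≤ B' := le_max_right _ _
  have hKnn : 0 ≤ K' := le_max_right _ _
  have hBb : ∀ u ∈ Set.Icc (0:ℝ) 1, |f u| ≤ B' := fun u hu =>
    le_trans (hB u hu) (le_max_left _ _)
  have hlip : ∀ u ∈ Set.Icc (0:ℝ) 1, ∀ v ∈ Set.Icc (0:ℝ) 1, |f v - f u| ≤ K' * |v - u| := by
    intro u hu v hv
    have := (convex_Icc (0:ℝ) 1).norm_image_sub_le_of_norm_deriv_le (C := K')
      (fun x _ => (hC1.differentiable one_ne_zero).differentiableAt)
      (fun x hx => le_trans (hK x hx) (le_max_left _ _)) hu hv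
    simpa [Real.norm_eq_abs] using this
  -- Taylor bound
  have hTay : ∀ x' ∈ Set.Icc (0:ℝ) 1, ∀ t ∈ Set.Icc (0:ℝ) 1,
      |(∫ s in (0:ℝ)..t, f s) - (∫ s in (0:ℝ)..x', f s) - f x' * (t - x')| ≤ K' * (t - x')^2 := by
    intro x' hx' t ht
    have hdiff : (∫ s in (0:ℝ)..t, f s) - (∫ s in (0:ℝ)..x', f s) = ∫ s in x'..t, f s :=
      intervalIntegral.integral_interval_sub_left (hfc.intervalIntegrable _ _)
        (hfc.intervalIntegrable _ _)
    have hconst : f x' * (t - x') = ∫ _s in x'..t, f x' := by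
      rw [intervalIntegral.integral_const]; ring_nf
    rw [hdiff, hconst, ← intervalIntegral.integral_sub (hfc.intervalIntegrable _ _)
      intervalIntegrable_const]
    have hbd : ∀ u ∈ Set.uIoc x' t, ‖f u - f x'‖ ≤ K' * |t - x'| := by
      intro u hu
      have hu' : u ∈ Set.Icc (0:ℝ) 1 := by
        rcases le_total x' t with h | h
        · rw [Set.uIoc_of_le h] at hu
          exact ⟨le_trans hx'.1 (le_of_lt hu.1), le_trans hu.2 ht.2⟩
        · rw [Set.uIoc_of_ge h] at hu
          exact ⟨le_trans ht.1 (le_of_lt hu.1), le_trans hu.2 hx'.2⟩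
      have h1 : |f u - f x'| ≤ K' * |u - x'| := hlip x' hx' u hu'
      have h2 : |u - x'| ≤ |t - x'| := by
        rcases le_total x' t with h | h
        · rw [Set.uIoc_of_le h] at hu
          rw [abs_of_nonneg (by linarith [hu.1.le] : (0:ℝ) ≤ u - x'),
            abs_of_nonneg (by linarith : (0:ℝ) ≤ t - x')]
          linarith [hu.2]
        · rw [Set.uIoc_of_ge h] at hu
          rw [abs_of_nonpos (by linarith [hu.2] : u - x' ≤ 0),
            abs_of_nonpos (by linarith : t - x' ≤ 0)]
          linarith [hu.1.le]
      calc ‖f u - f x'‖ = |f u - f x'| := rfl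
        _ ≤ K' * |u - x'| := h1
        _ ≤ K' * |t - x'| := by nlinarith [abs_nonneg (u - x')]
    have := intervalIntegral.norm_integral_le_of_norm_le_const hbd
    rw [Real.norm_eq_abs] at this
    calc |∫ u in x'..t, (f u - f x')| ≤ K' * |t - x'| * |t - x'| := this
      _ = K' * (t - x')^2 := by rw [mul_assoc, ← abs_mul, ← sq, abs_of_nonneg (sq_nonneg _)]
  refine ⟨B' + 2*K' + 1, by positivity, ?_⟩
  intro m hm
  have hm' : (0:ℝ) < m := by exact_mod_cast hm
  have : Nonempty (Set.Icc a (1-a)) := Set.Nonempty.to_subtype (Set.nonempty_Icc.2 (by linarith))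
  refine ciSup_le ?_
  rintro ⟨x0, hx⟩
  simp only
  rw [Set.mem_Icc] at hx
  have hx0 : 0 ≤ x0 := le_of_lt (lt_of_lt_of_le ha0 hx.1)
  have hx1 : x0 ≤ 1 := le_trans hx.2 (by linarith)
  have hxlt1 : x0 < 1 := lt_of_le_of_lt hx.2 (by linarith)
  set j := ⌊(m:ℝ)*x0⌋₊ with hjdef
  have hjm : j < m := by
    rw [hjdef, Nat.floor_lt (mul_nonneg (le_of_lt hm') hx0)]
    nlinarith
  have hJl : (j:ℝ) ≤ (m:ℝ)*x0 := Nat.floor_le (mul_nonneg (le_of_lt hm') hx0)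
  have hJu : (m:ℝ)*x0 < (j:ℝ) + 1 := by
    have := Nat.lt_floor_add_one ((m:ℝ)*x0); push_cast at this ⊢; linarith
  have hJm : (j:ℝ) + 1 ≤ (m:ℝ) := by exact_mod_cast Nat.succ_le_of_lt hjm
  -- rewrite the two CDFs
  rw [cdf_mix f hf0 hfc m (by omega) x0 hx0 (by rw [← hjdef]; exact hjm),
    cdf_density f hf0 hfc x0 hx0 hx1]
  rw [← hjdef]
  -- abbreviations (explicit)
  have hφc : Continuous (fun t : ℝ => t^j * (1-t)^(m-1-j)) := by fun_prop
  have hφnn : ∀ t ∈ Set.Icc (0:ℝ) 1, 0 ≤ t^j * (1-t)^(m-1-j) := by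
    intro t ht
    have h1 : (0:ℝ) ≤ 1 - t := by linarith [ht.2]
    have h0 : (0:ℝ) ≤ t := ht.1
    positivity
  have hcnn : (0:ℝ) ≤ (m:ℝ) * (((m-1).choose j : ℕ) : ℝ) := by positivity
  -- derivative of V
  have hVd : ∀ u : ℝ, HasDerivAt (fun v => ∫ t in v..(1:ℝ), t^j * (1-t)^(m-1-j))
      (-(u^j * (1-u)^(m-1-j))) u := by
    intro u
    have hint : HasDerivAt (fun v => ∫ t in (1:ℝ)..v, t^j * (1-t)^(m-1-j))
        (u^j * (1-u)^(m-1-j)) u := by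
      refine intervalIntegral.integral_hasDerivAt_right (hφc.intervalIntegrable _ _) ?_
        hφc.continuousAt
      exact hφc.stronglyMeasurable.stronglyMeasurableAtFilter
    have hown : (fun v => ∫ t in v..(1:ℝ), t^j * (1-t)^(m-1-j))
        = fun v => -(∫ t in (1:ℝ)..v, t^j*(1-t)^(m-1-j)) := by
      funext v; rw [intervalIntegral.integral_symm 1 v]
    rw [hown]
    exact hint.neg
  have hVc : Continuous (fun v => ∫ t in v..(1:ℝ), t^j * (1-t)^(m-1-j)) := by
    have : Differentiable ℝ (fun v => ∫ t in v..(1:ℝ), t^j * (1-t)^(m-1-j)) :=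
      fun u => (hVd u).differentiableAt
    exact this.continuous
  -- integration by parts
  have hibp : (∫ u in (0:ℝ)..1, (f u * (∫ t in u..(1:ℝ), t^j * (1-t)^(m-1-j))
        + (∫ s in (0:ℝ)..u, f s) * (-(u^j * (1-u)^(m-1-j)))))
      = ((∫ s in (0:ℝ)..1, f s) * (∫ t in (1:ℝ)..(1:ℝ), t^j * (1-t)^(m-1-j))
        - (∫ s in (0:ℝ)..0, f s) * (∫ t in (0:ℝ)..(1:ℝ), t^j * (1-t)^(m-1-j))) := by
    have := intervalIntegral.integral_eq_sub_of_hasDerivAt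
      (f := fun v => (∫ s in (0:ℝ)..v, f s) * (∫ t in v..(1:ℝ), t^j * (1-t)^(m-1-j)))
      (f' := fun u => f u * (∫ t in u..(1:ℝ), t^j * (1-t)^(m-1-j))
        + (∫ s in (0:ℝ)..u, f s) * (-(u^j * (1-u)^(m-1-j))))
      (a := 0) (b := 1)
      (fun u _ => (hFrd u).mul (hVd u))
      (((hfc.mul hVc).add (hFrc.mul (by fun_prop : Continuous
        (fun u : ℝ => -(u^j * (1-u)^(m-1-j)))))).intervalIntegrable _ _)
    simpa using this
  have hibp' : (∫ u in (0:ℝ)..1, f u * (∫ t in u..(1:ℝ), t^j * (1-t)^(m-1-j)))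
      = ∫ u in (0:ℝ)..1, (∫ s in (0:ℝ)..u, f s) * (u^j * (1-u)^(m-1-j)) := by
    rw [intervalIntegral.integral_add (f := fun u => f u * (∫ t in u..(1:ℝ), t^j * (1-t)^(m-1-j))) (g := fun u => (∫ s in (0:ℝ)..u, f s) * (-(u^j * (1-u)^(m-1-j)))) ((hfc.mul hVc).intervalIntegrable _ _)
        ((hFrc.mul (by fun_prop : Continuous (fun u : ℝ => -(u^j * (1-u)^(m-1-j))))).intervalIntegrable _ _)] at hibp
    simp only [intervalIntegral.integral_same, mul_zero, zero_mul, mul_neg,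
      intervalIntegral.integral_neg, sub_zero, zero_sub, neg_eq_zero] at hibp
    linarith [hibp]
  -- moment integrals
  have h0 := beta_nat_integral j (m-1-j)
  rw [show j+(m-1-j)+1 = m from by omega, show j+(m-1-j) = m-1 from by omega] at h0
  have h1 := beta_nat_integral (j+1) (m-1-j)
  rw [show j+1+(m-1-j)+1 = m+1 from by omega, show j+1+(m-1-j) = m from by omega] at h1
  have h2 := beta_nat_integral (j+2) (m-1-j)
  rw [show j+2+(m-1-j)+1 = m+2 from by omega, show j+2+(m-1-j) = m+1 from by omega] at h2
  push_cast at h0 h1 h2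
  have n1 : (m:ℝ) * (((m-1).choose j : ℕ) : ℝ) = ((m.choose (j+1) : ℕ) : ℝ) * ((j:ℝ)+1) := by
    exact_mod_cast congrArg (Nat.cast (R := ℝ)) (choose_id m j (by omega))
  have n2 : ((m:ℝ)+1) * ((m.choose (j+1) : ℕ) : ℝ)
      = (((m+1).choose (j+2) : ℕ) : ℝ) * ((j:ℝ)+2) := by
    have hh := choose_id (m+1) (j+1) (by omega)
    rw [show m+1-1 = m from by omega] at hh
    exact_mod_cast congrArg (Nat.cast (R := ℝ)) hh
  have e1 : ((m:ℝ)+1) * (((m:ℝ) * (((m-1).choose j : ℕ) : ℝ))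
      * (∫ t in (0:ℝ)..1, t^(j+1)*(1-t)^(m-1-j))) = (j:ℝ)+1 := by
    linear_combination ((m:ℝ)+1) * (∫ t in (0:ℝ)..1, t^(j+1)*(1-t)^(m-1-j)) * n1 + ((j:ℝ)+1) * h1
  have e2 : (((m:ℝ)+1)*((m:ℝ)+2)) * (((m:ℝ) * (((m-1).choose j : ℕ) : ℝ))
      * (∫ t in (0:ℝ)..1, t^(j+2)*(1-t)^(m-1-j))) = ((j:ℝ)+1)*((j:ℝ)+2) := by
    linear_combination (((m:ℝ)+1)*((m:ℝ)+2)) * (∫ t in (0:ℝ)..1, t^(j+2)*(1-t)^(m-1-j)) * n1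
      + ((j:ℝ)+1)*((m:ℝ)+2) * (∫ t in (0:ℝ)..1, t^(j+2)*(1-t)^(m-1-j)) * n2
      + (((j:ℝ)+1)*((j:ℝ)+2)) * h2
  -- integrability of basic pieces
  have hint0 : IntervalIntegrable (fun u : ℝ => u^j*(1-u)^(m-1-j)) volume 0 1 :=
    hφc.intervalIntegrable _ _
  have hint1 : IntervalIntegrable (fun u : ℝ => (u - x0) * (u^j*(1-u)^(m-1-j))) volume 0 1 :=
    (by fun_prop : Continuous fun u : ℝ => (u - x0) * (u^j*(1-u)^(m-1-j))).intervalIntegrable _ _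
  have hRcont : Continuous (fun u : ℝ =>
      ((∫ s in (0:ℝ)..u, f s) - (∫ s in (0:ℝ)..x0, f s) - f x0*(u-x0))) := by
    apply Continuous.sub
    apply Continuous.sub hFrc continuous_const
    fun_prop
  have hintR : IntervalIntegrable (fun u : ℝ =>
      ((∫ s in (0:ℝ)..u, f s) - (∫ s in (0:ℝ)..x0, f s) - f x0*(u-x0)) * (u^j*(1-u)^(m-1-j)))
      volume 0 1 := (hRcont.mul hφc).intervalIntegrable _ _
  -- weighted moments
  have m1val : ((m:ℝ) * (((m-1).choose j : ℕ) : ℝ))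
      * (∫ u in (0:ℝ)..1, (u - x0) * (u^j*(1-u)^(m-1-j)))
      = ((j:ℝ)+1)/((m:ℝ)+1) - x0 := by
    have hpt : (fun u : ℝ => (u - x0) * (u^j*(1-u)^(m-1-j)))
        = fun u : ℝ => (u^(j+1)*(1-u)^(m-1-j)) - x0 * (u^j*(1-u)^(m-1-j)) := by
      funext u; ring
    rw [hpt, intervalIntegral.integral_sub
        ((by fun_prop : Continuous fun u : ℝ => u^(j+1)*(1-u)^(m-1-j)).intervalIntegrable _ _)
        ((by fun_prop : Continuous fun u : ℝ => x0 * (u^j*(1-u)^(m-1-j))).intervalIntegrable _ _),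
      intervalIntegral.integral_const_mul]
    have hW : ((j:ℝ)+1)/((m:ℝ)+1) - x0 = (((j:ℝ)+1) - x0*((m:ℝ)+1))/((m:ℝ)+1) := by
      field_simp
    rw [hW, eq_div_iff (by positivity : ((m:ℝ)+1) ≠ 0)]
    linear_combination e1 - x0*((m:ℝ)+1)*h0
  have m2val : ((m:ℝ) * (((m-1).choose j : ℕ) : ℝ))
      * (∫ u in (0:ℝ)..1, (u - x0)^2 * (u^j*(1-u)^(m-1-j)))
      = ((j:ℝ)+1)*((j:ℝ)+2)/(((m:ℝ)+1)*((m:ℝ)+2)) - 2*x0*(((j:ℝ)+1)/((m:ℝ)+1)) + x0^2 := by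
    have hpt : (fun u : ℝ => (u - x0)^2 * (u^j*(1-u)^(m-1-j)))
        = fun u : ℝ => ((u^(j+2)*(1-u)^(m-1-j)) - (2*x0) * (u^(j+1)*(1-u)^(m-1-j)))
          + x0^2 * (u^j*(1-u)^(m-1-j)) := by
      funext u; ring
    rw [hpt, intervalIntegral.integral_add (IntervalIntegrable.sub
        ((by fun_prop : Continuous fun u : ℝ => u^(j+2)*(1-u)^(m-1-j)).intervalIntegrable _ _)
        ((by fun_prop : Continuous fun u : ℝ => (2*x0) * (u^(j+1)*(1-u)^(m-1-j))).intervalIntegrable _ _))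
        ((by fun_prop : Continuous fun u : ℝ => x0^2 * (u^j*(1-u)^(m-1-j))).intervalIntegrable _ _),
      intervalIntegral.integral_sub
        ((by fun_prop : Continuous fun u : ℝ => u^(j+2)*(1-u)^(m-1-j)).intervalIntegrable _ _)
        ((by fun_prop : Continuous fun u : ℝ => (2*x0) * (u^(j+1)*(1-u)^(m-1-j))).intervalIntegrable _ _),
      intervalIntegral.integral_const_mul, intervalIntegral.integral_const_mul]
    have hW : ((j:ℝ)+1)*((j:ℝ)+2)/(((m:ℝ)+1)*((m:ℝ)+2)) - 2*x0*(((j:ℝ)+1)/((m:ℝ)+1)) + x0^2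
        = (((j:ℝ)+1)*((j:ℝ)+2) - 2*x0*((j:ℝ)+1)*((m:ℝ)+2) + x0^2*((m:ℝ)+1)*((m:ℝ)+2))
          /(((m:ℝ)+1)*((m:ℝ)+2)) := by
      field_simp
    rw [hW, eq_div_iff (by positivity : ((m:ℝ)+1)*((m:ℝ)+2) ≠ 0)]
    linear_combination e2 - 2*x0*((m:ℝ)+2)*e1 + x0^2*((m:ℝ)+1)*((m:ℝ)+2)*h0
  -- rewrite mixture cdf via IBP
  have hsum2int : (∫ s in (0:ℝ)..1, f s * ∑ k ∈ Finset.range (j+1), binomPMFr m k s)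
      = ((m:ℝ) * (((m-1).choose j : ℕ) : ℝ))
        * ∫ u in (0:ℝ)..1, (∫ s in (0:ℝ)..u, f s) * (u^j*(1-u)^(m-1-j)) := by
    have hpt : (fun s => f s * ∑ k ∈ Finset.range (j+1), binomPMFr m k s)
        = fun s => ((m:ℝ) * (((m-1).choose j : ℕ) : ℝ))
          * (f s * (∫ t in s..(1:ℝ), t^j*(1-t)^(m-1-j))) := by
      funext s; rw [key_identity m j hjm s]; ring
    rw [hpt, intervalIntegral.integral_const_mul, hibp']
  have hdecomp : (∫ u in (0:ℝ)..1, (∫ s in (0:ℝ)..u, f s) * (u^j*(1-u)^(m-1-j)))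
      = f x0 * (∫ u in (0:ℝ)..1, (u - x0) * (u^j*(1-u)^(m-1-j)))
        + (∫ u in (0:ℝ)..1, ((∫ s in (0:ℝ)..u, f s) - (∫ s in (0:ℝ)..x0, f s) - f x0*(u-x0))
            * (u^j*(1-u)^(m-1-j)))
        + (∫ s in (0:ℝ)..x0, f s) * (∫ u in (0:ℝ)..1, u^j*(1-u)^(m-1-j)) := by
    rw [← intervalIntegral.integral_const_mul, ← intervalIntegral.integral_const_mul,
      ← intervalIntegral.integral_add (hint1.const_mul _) hintR,
      ← intervalIntegral.integral_add ((hint1.const_mul _).add hintR) (hint0.const_mul _)]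
    congr 1
    funext u
    ring
  have hkey3 : (∫ s in (0:ℝ)..1, f s * ∑ k ∈ Finset.range (j+1), binomPMFr m k s)
        - (∫ s in (0:ℝ)..x0, f s)
      = f x0 * (((m:ℝ) * (((m-1).choose j : ℕ):ℝ))
          * (∫ u in (0:ℝ)..1, (u - x0)*(u^j*(1-u)^(m-1-j))))
        + ((m:ℝ) * (((m-1).choose j : ℕ):ℝ))
          * (∫ u in (0:ℝ)..1, ((∫ s in (0:ℝ)..u, f s) - (∫ s in (0:ℝ)..x0, f s) - f x0*(u-x0))
              * (u^j*(1-u)^(m-1-j))) := by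
    rw [hsum2int, hdecomp]
    linear_combination (∫ s in (0:ℝ)..x0, f s) * h0
  rw [hkey3]
  have hM1le : (1:ℝ) ≤ (m:ℝ) := by exact_mod_cast hm
  -- first moment bound
  have H1 : |((j:ℝ)+1)/((m:ℝ)+1) - x0| ≤ 1/(m:ℝ) := by
    have hnum : |((j:ℝ)+1) - x0*((m:ℝ)+1)| ≤ 1 := by
      rw [abs_le]
      constructor
      · nlinarith [hJu, hx1]
      · nlinarith [hJl, hx0]
    have hrw2 : ((j:ℝ)+1)/((m:ℝ)+1) - x0 = (((j:ℝ)+1) - x0*((m:ℝ)+1))/((m:ℝ)+1) := by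
      field_simp
    rw [hrw2, abs_div, abs_of_pos (by positivity : (0:ℝ) < (m:ℝ)+1),
      div_le_div_iff₀ (by positivity : (0:ℝ) < (m:ℝ)+1) hm']
    nlinarith [abs_nonneg (((j:ℝ)+1) - x0*((m:ℝ)+1))]
  have habs1 : |((m:ℝ) * (((m-1).choose j:ℕ):ℝ))
      * (∫ u in (0:ℝ)..1, (u - x0)*(u^j*(1-u)^(m-1-j)))| ≤ 1/(m:ℝ) := by
    rw [m1val]; exact H1
  -- second moment bound
  have hI2 : ((m:ℝ) * (((m-1).choose j:ℕ):ℝ))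
      * (∫ u in (0:ℝ)..1, (u - x0)^2 * (u^j*(1-u)^(m-1-j))) ≤ 2/(m:ℝ) := by
    rw [m2val]
    have hrw : ((j:ℝ)+1)*((j:ℝ)+2)/(((m:ℝ)+1)*((m:ℝ)+2)) - 2*x0*(((j:ℝ)+1)/((m:ℝ)+1)) + x0^2
        = ((j:ℝ)+1)*((m:ℝ)-(j:ℝ))/(((m:ℝ)+1)^2*((m:ℝ)+2)) + (((j:ℝ)+1)/((m:ℝ)+1) - x0)^2 := by
      field_simp
      ring
    rw [hrw]
    have hA : ((j:ℝ)+1)*((m:ℝ)-(j:ℝ))/(((m:ℝ)+1)^2*((m:ℝ)+2)) ≤ 1/(m:ℝ) := by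
      rw [div_le_div_iff₀ (by positivity) hm']
      nlinarith [sq_nonneg (2*(j:ℝ)+1-(m:ℝ)), sq_nonneg ((m:ℝ)+1), hJm, hm']
    have hBq : (((j:ℝ)+1)/((m:ℝ)+1) - x0)^2 ≤ 1/(m:ℝ) := by
      have h2 : (((j:ℝ)+1)/((m:ℝ)+1) - x0)^2 ≤ (1/(m:ℝ))^2 := by
        rw [← sq_abs]
        exact pow_le_pow_left₀ (abs_nonneg _) H1 2
      have h3 : (1/(m:ℝ))^2 ≤ 1/(m:ℝ) := by
        have h1M : 1/(m:ℝ) ≤ 1 := by rw [div_le_one hm']; exact hM1le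
        nlinarith [one_div_nonneg.2 hm'.le]
      linarith
    have h2m : 1/(m:ℝ) + 1/(m:ℝ) = 2/(m:ℝ) := by ring
    exact le_of_le_of_eq (add_le_add hA hBq) h2m
  -- remainder bound
  have hremb : |∫ u in (0:ℝ)..1, ((∫ s in (0:ℝ)..u, f s) - (∫ s in (0:ℝ)..x0, f s) - f x0*(u-x0))
        * (u^j*(1-u)^(m-1-j))|
      ≤ K' * ∫ u in (0:ℝ)..1, (u - x0)^2 * (u^j*(1-u)^(m-1-j)) := by
    have hstep1 : |∫ u in (0:ℝ)..1, ((∫ s in (0:ℝ)..u, f s) - (∫ s in (0:ℝ)..x0, f s) - f x0*(u-x0))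
          * (u^j*(1-u)^(m-1-j))|
        ≤ ∫ u in (0:ℝ)..1, |((∫ s in (0:ℝ)..u, f s) - (∫ s in (0:ℝ)..x0, f s) - f x0*(u-x0))
          * (u^j*(1-u)^(m-1-j))| :=
      intervalIntegral.abs_integral_le_integral_abs (by norm_num)
    have hstep2 : (∫ u in (0:ℝ)..1, |((∫ s in (0:ℝ)..u, f s) - (∫ s in (0:ℝ)..x0, f s) - f x0*(u-x0))
          * (u^j*(1-u)^(m-1-j))|)
        ≤ ∫ u in (0:ℝ)..1, K' * ((u - x0)^2 * (u^j*(1-u)^(m-1-j))) := by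
      refine intervalIntegral.integral_mono_on (by norm_num)
        ((hRcont.mul hφc).abs.intervalIntegrable _ _)
        ((by fun_prop : Continuous fun u : ℝ =>
          K' * ((u - x0)^2 * (u^j*(1-u)^(m-1-j)))).intervalIntegrable _ _) ?_
      intro u hu
      rw [abs_mul, abs_of_nonneg (hφnn u hu)]
      have ht := hTay x0 ⟨hx0, hx1⟩ u hu
      calc |(∫ s in (0:ℝ)..u, f s) - (∫ s in (0:ℝ)..x0, f s) - f x0*(u-x0)| * (u^j*(1-u)^(m-1-j))
          ≤ (K' * (u - x0)^2) * (u^j*(1-u)^(m-1-j)) :=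
            mul_le_mul_of_nonneg_right ht (hφnn u hu)
        _ = K' * ((u - x0)^2 * (u^j*(1-u)^(m-1-j))) := by ring
    rw [intervalIntegral.integral_const_mul] at hstep2
    linarith
  -- put everything together
  have hI2' : (0:ℝ) ≤ ∫ u in (0:ℝ)..1, (u - x0)^2 * (u^j*(1-u)^(m-1-j)) := by
    refine intervalIntegral.integral_nonneg (by norm_num) ?_
    intro u hu
    exact mul_nonneg (sq_nonneg _) (hφnn u hu)
  have bound1 : |f x0 * (((m:ℝ) * (((m-1).choose j : ℕ):ℝ))
        * (∫ u in (0:ℝ)..1, (u - x0)*(u^j*(1-u)^(m-1-j))))| ≤ B' * (1/(m:ℝ)) := by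
    rw [abs_mul]
    exact mul_le_mul (hBb x0 ⟨hx0, hx1⟩) habs1 (abs_nonneg _) hBnn
  have bound2 : |((m:ℝ) * (((m-1).choose j : ℕ):ℝ))
        * (∫ u in (0:ℝ)..1, ((∫ s in (0:ℝ)..u, f s) - (∫ s in (0:ℝ)..x0, f s) - f x0*(u-x0))
            * (u^j*(1-u)^(m-1-j)))| ≤ K' * (2/(m:ℝ)) := by
    rw [abs_mul, abs_of_nonneg hcnn]
    have ha := mul_le_mul_of_nonneg_left hremb hcnn
    have hb := mul_le_mul_of_nonneg_left hI2 hKnn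
    nlinarith [ha, hb]
  calc |f x0 * (((m:ℝ) * (((m-1).choose j : ℕ):ℝ))
          * (∫ u in (0:ℝ)..1, (u - x0)*(u^j*(1-u)^(m-1-j))))
        + ((m:ℝ) * (((m-1).choose j : ℕ):ℝ))
          * (∫ u in (0:ℝ)..1, ((∫ s in (0:ℝ)..u, f s) - (∫ s in (0:ℝ)..x0, f s) - f x0*(u-x0))
              * (u^j*(1-u)^(m-1-j)))|
      ≤ B' * (1/(m:ℝ)) + K' * (2/(m:ℝ)) := le_trans (abs_add_le _ _) (add_le_add bound1 bound2)
    _ ≤ (B' + 2*K' + 1)/(m:ℝ) := by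
        have hfs : B' * (1/(m:ℝ)) + K' * (2/(m:ℝ)) = (B' + 2*K')/(m:ℝ) := by ring
        rw [hfs]
        exact (div_le_div_iff_of_pos_right hm').2 (by linarith)
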